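/- Let M = [a,b) and N = [c,d) be interval modules with 0 ≤ a < b ≤ c < d (disjoint supports with M below N). Then S_{M,N} = [max{c−a, d−b}, d−a) and S_{N,M} = ∅. -/

import Mathlib

open scoped NNReal

/-- A persistence module: a functor from `[0,∞)` to real vector spaces. -/
structure PM where
  V : ℝ≥0 → Type
  [grp : ∀ x, AddCommGroup (V x)]
  [mod : ∀ x, Module ℝ (V x)]
  map : ∀ {x y : ℝ≥0}, x ≤ y → (V x →ₗ[ℝ] V y)
  map_id : ∀ x : ℝ≥0, map (le_refl x) = LinearMap.id
  map_comp : ∀ {x y z : ℝ≥0} (h1 : x ≤ y) (h2 : y ≤ z),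
    (map h2).comp (map h1) = map (h1.trans h2)

attribute [instance] PM.grp PM.mod

/-- A morphism of persistence modules. -/
structure PM.Hom (M N : PM) where
  app : ∀ x : ℝ≥0, M.V x →ₗ[ℝ] N.V x
  comm : ∀ {x y : ℝ≥0} (h : x ≤ y), (app y).comp (M.map h) = (N.map h).comp (app x)

/-- The shifted module `M·ε`. -/
def PM.shift (M : PM) (ε : ℝ≥0) : PM where
  V x := M.V (x + ε)
  grp x := inferInstance
  mod x := inferInstance
  map h := M.map (add_le_add h (le_refl ε))
  map_id x := M.map_id (x + ε)
  map_comp h1 h2 := M.map_comp _ _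

noncomputable def intervalSub (α β : ℝ) (x : ℝ≥0) : Submodule ℝ ℝ :=
  if α ≤ (x : ℝ) ∧ (x : ℝ) < β then ⊤ else ⊥

/-- The interval module `[α,β)`. -/
noncomputable def intervalModule (α β : ℝ) : PM where
  V x := ↥(intervalSub α β x)
  grp x := inferInstance
  mod x := inferInstance
  map {x y} h := LinearMap.codRestrict _
      ((if α ≤ (x : ℝ) ∧ (y : ℝ) < β then (1 : ℝ) else 0) • (intervalSub α β x).subtype)
      (by
        intro v
        by_cases hy : α ≤ (y : ℝ) ∧ (y : ℝ) < β
        · simp [intervalSub, hy]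
        · have hc : ¬(α ≤ (x : ℝ) ∧ (y : ℝ) < β) := by
            intro hc
            exact hy ⟨le_trans hc.1 (by exact_mod_cast h), hc.2⟩
          simp [intervalSub, hy, hc]
          first
            | exact LinearMap.congr_fun (zero_smul ℝ _) v
            | simp)
  map_id x := by
    ext v
    by_cases hx : α ≤ (x : ℝ) ∧ (x : ℝ) < β
    · simp [hx]
    · have hv : (v : ℝ) = 0 := by
        have h2 := v.2
        simp only [intervalSub, if_neg hx, Submodule.mem_bot] at h2
        exact h2
      simp [hx, hv]
  map_comp {x y z} h1 h2 := by
    ext v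
    by_cases hC : α ≤ (x : ℝ) ∧ (z : ℝ) < β
    · have hA : α ≤ (x : ℝ) ∧ (y : ℝ) < β :=
        ⟨hC.1, lt_of_le_of_lt (by exact_mod_cast h2) hC.2⟩
      have hB : α ≤ (y : ℝ) ∧ (z : ℝ) < β :=
        ⟨le_trans hC.1 (by exact_mod_cast h1), hC.2⟩
      simp [hA, hB, hC]
    · rcases not_and_or.mp hC with hx | hz
      · have hA : ¬(α ≤ (x : ℝ) ∧ (y : ℝ) < β) := fun h => hx h.1
        simp [hA, hC]
        split_ifs <;> simp
      · have hB : ¬(α ≤ (y : ℝ) ∧ (z : ℝ) < β) := fun h => hz h.2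
        simp [hB, hC]

/-- `Hom(M,N) ≠ {0}`: there is a nonzero morphism from `M` to `N`. -/
def HomNeZero (M N : PM) : Prop := ∃ F : PM.Hom M N, ∃ x, F.app x ≠ 0

/-- `S_{M,N} = {x ≥ 0 : Hom(M, N·x) ≠ {0}}`. -/
noncomputable def Sset (M N : PM) : Set ℝ :=
  {x : ℝ | 0 ≤ x ∧ HomNeZero M (N.shift x.toNNReal)}

/-- The canonical morphism `Π_M^{M·τ} : M → M·τ`. -/
def PM.pi (M : PM) (τ : ℝ≥0) : M.Hom (M.shift τ) where
  app x := M.map le_self_add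
  comm {x y} h := by
    show (M.map le_self_add).comp (M.map h) =
      (M.map (add_le_add h (le_refl τ))).comp (M.map le_self_add)
    rw [M.map_comp, M.map_comp]

/-- The pair `(Φ, Ψ)` is an `ε`-interleaving between `M` and `N`:
`(Ψ·ε) ∘ Φ = Π_M^{M·2ε}` and `(Φ·ε) ∘ Ψ = Π_N^{N·2ε}` (expressed pointwise). -/
def IsInterleaving (M N : PM) (ε : ℝ≥0)
    (Φ : M.Hom (N.shift ε)) (Ψ : N.Hom (M.shift ε)) : Prop :=
  (∀ x : ℝ≥0, (Ψ.app (x + ε)).comp (Φ.app x) =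
      M.map (le_self_add.trans le_self_add : x ≤ x + ε + ε)) ∧
  (∀ x : ℝ≥0, (Φ.app (x + ε)).comp (Ψ.app x) =
      N.map (le_self_add.trans le_self_add : x ≤ x + ε + ε))

lemma ne_zero_cond {α β : ℝ} {x : ℝ≥0} (w : ↥(intervalSub α β x)) (hw : w.val ≠ 0) :
    α ≤ (x : ℝ) ∧ (x : ℝ) < β := by
  by_contra h
  have hbot : intervalSub α β x = ⊥ := if_neg h
  have h2 : w.val ∈ (⊥ : Submodule ℝ ℝ) := by rw [← hbot]; exact w.2
  exact hw (by simpa using h2)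

lemma map_val (α β : ℝ) {x y : ℝ≥0} (h : x ≤ y) (v : ↥(intervalSub α β x)) :
    ((intervalModule α β).map h v).val =
      (if α ≤ (x : ℝ) ∧ (y : ℝ) < β then (1 : ℝ) else 0) * v.val := by
  rfl

lemma app_ne_zero {M N : PM} {F : M.Hom N} {x : ℝ≥0} (hF : F.app x ≠ 0) :
    ∃ v, F.app x v ≠ 0 := by
  by_contra h; push_neg at h; exact hF (LinearMap.ext fun v => by simpa using h v)

/-- Forward direction: nonzero hom implies the interleaving-type inequalities. -/
lemma forward_cond (a b c d : ℝ) (ha : 0 ≤ a) (hab : a < b) (ε : ℝ≥0)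
    (H : HomNeZero (intervalModule a b) ((intervalModule c d).shift ε)) :
    c ≤ a + ε ∧ d ≤ b + ε ∧ a + (ε : ℝ) < d := by
  obtain ⟨F, x, hF⟩ := H
  obtain ⟨v, hv⟩ := app_ne_zero hF
  have hv0 : v ≠ 0 := fun h => hv (by rw [h, map_zero])
  have hvR : v.val ≠ 0 := fun h => hv0 (Subtype.ext h)
  have hx : a ≤ (x : ℝ) ∧ (x : ℝ) < b := ne_zero_cond v hvR
  set a' : ℝ≥0 := a.toNNReal with ha'def
  have ha' : (a' : ℝ) = a := Real.coe_toNNReal a ha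
  have hax : a' ≤ x := by
    rw [← NNReal.coe_le_coe, ha']; exact hx.1
  have hmem : v.val ∈ intervalSub a b a' := by
    have htop : intervalSub a b a' = ⊤ :=
      if_pos ⟨le_of_eq ha'.symm, by rw [ha']; exact hab⟩
    rw [htop]; trivial
  set v' : ↥(intervalSub a b a') := ⟨v.val, hmem⟩ with hv'def
  have hmap : (intervalModule a b).map hax v' = v := by
    apply Subtype.ext
    rw [map_val, if_pos ⟨le_of_eq ha'.symm, hx.2⟩, one_mul]
  have hcomm := F.comm hax
  have heval : F.app x ((intervalModule a b).map hax v') =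
      ((intervalModule c d).shift ε).map hax (F.app a' v') := by
    have h1 := LinearMap.congr_fun hcomm v'
    exact h1
  rw [hmap] at heval
  have hFa' : F.app a' v' ≠ 0 := by
    intro h0
    rw [h0, map_zero] at heval
    exact hv heval
  have hFa'R : (F.app a' v' : ↥(intervalSub c d (a' + ε))).val ≠ 0 :=
    fun h => hFa' (Subtype.ext h)
  have hcond : c ≤ ((a' + ε : ℝ≥0) : ℝ) ∧ ((a' + ε : ℝ≥0) : ℝ) < d :=
    ne_zero_cond _ hFa'R
  rw [NNReal.coe_add, ha'] at hcond
  refine ⟨hcond.1, ?_, hcond.2⟩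
  -- show d ≤ b + ε
  by_contra hbd
  push_neg at hbd
  set b' : ℝ≥0 := b.toNNReal with hb'def
  have hb' : (b' : ℝ) = b := Real.coe_toNNReal b (le_of_lt (lt_of_le_of_lt ha hab))
  have hab' : a' ≤ b' := by rw [← NNReal.coe_le_coe, ha', hb']; exact le_of_lt hab
  have hcomm2 := F.comm hab'
  have heval2 : F.app b' ((intervalModule a b).map hab' v') =
      ((intervalModule c d).shift ε).map hab' (F.app a' v') := by
    have h1 := LinearMap.congr_fun hcomm2 v'
    exact h1
  have hmap0 : (intervalModule a b).map hab' v' = 0 := by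
    apply Subtype.ext
    rw [map_val, if_neg (fun hc => absurd hc.2 (by rw [hb']; exact lt_irrefl b)), zero_mul]
    rfl
  rw [hmap0, map_zero] at heval2
  have hshift : (((intervalModule c d).shift ε).map hab' :
      ↥(intervalSub c d (a' + ε)) →ₗ[ℝ] ↥(intervalSub c d (b' + ε))) =
      (intervalModule c d).map (add_le_add hab' (le_refl ε)) := rfl
  have hval : ((intervalModule c d).map (add_le_add hab' (le_refl ε)) (F.app a' v')).val =
      ((0 : ↥(intervalSub c d (b' + ε)))).val := congrArg Subtype.val heval2.symm
  replace hval := (map_val c d (add_le_add hab' (le_refl ε)) (F.app a' v')).symm.trans hval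
  rw [if_pos ⟨by rw [NNReal.coe_add, ha']; exact hcond.1,
    by rw [NNReal.coe_add, hb']; exact hbd⟩, one_mul] at hval
  exact hFa'R (by simpa using hval)

/-- Construction of a nonzero hom when the inequalities hold. -/
noncomputable def buildHom (a b c d : ℝ) (ε : ℝ≥0) (hca : c ≤ a + ε) (hdb : d ≤ b + ε) :
    PM.Hom (intervalModule a b) ((intervalModule c d).shift ε) where
  app x := LinearMap.codRestrict (intervalSub c d (x + ε))
    ((if a ≤ (x : ℝ) ∧ ((x + ε : ℝ≥0) : ℝ) < d then (1 : ℝ) else 0) •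
      (intervalSub a b x).subtype)
    (by
      intro v
      by_cases hx : a ≤ (x : ℝ) ∧ ((x + ε : ℝ≥0) : ℝ) < d
      · have htop : intervalSub c d (x + ε) = ⊤ := by
          refine if_pos ⟨?_, hx.2⟩
          rw [NNReal.coe_add]
          linarith [hx.1]
        rw [htop]; trivial
      · rw [if_neg hx]; simp; exact Submodule.zero_mem _)
  comm {x y} h := by
    refine LinearMap.ext fun v => Subtype.ext ?_
    show ((if a ≤ (y : ℝ) ∧ ((y + ε : ℝ≥0) : ℝ) < d then (1 : ℝ) else 0) *
        ((if a ≤ (x : ℝ) ∧ (y : ℝ) < b then (1 : ℝ) else 0) * v.val)) =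
      ((if c ≤ ((x + ε : ℝ≥0) : ℝ) ∧ ((y + ε : ℝ≥0) : ℝ) < d then (1 : ℝ) else 0) *
        ((if a ≤ (x : ℝ) ∧ ((x + ε : ℝ≥0) : ℝ) < d then (1 : ℝ) else 0) * v.val))
    by_cases hv : v.val = 0
    · rw [hv]; ring
    · have hx : a ≤ (x : ℝ) ∧ (x : ℝ) < b := ne_zero_cond v hv
      have hxy : (x : ℝ) ≤ (y : ℝ) := NNReal.coe_le_coe.mpr h
      by_cases hyd : ((y + ε : ℝ≥0) : ℝ) < d
      · have hyεℝ : (y : ℝ) + (ε : ℝ) < d := by rw [← NNReal.coe_add]; exact hyd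
        have hxd : ((x + ε : ℝ≥0) : ℝ) < d := by
          rw [NNReal.coe_add]; linarith
        have hyb : (y : ℝ) < b := by linarith
        have hcx : c ≤ ((x + ε : ℝ≥0) : ℝ) := by
          rw [NNReal.coe_add]; linarith [hx.1]
        rw [if_pos ⟨le_trans hx.1 hxy, hyd⟩, if_pos ⟨hx.1, hyb⟩,
          if_pos ⟨hcx, hyd⟩, if_pos ⟨hx.1, hxd⟩]
      · rw [if_neg (show ¬(a ≤ (y : ℝ) ∧ ((y + ε : ℝ≥0) : ℝ) < d) from fun hc => hyd hc.2),
          if_neg (show ¬(c ≤ ((x + ε : ℝ≥0) : ℝ) ∧ ((y + ε : ℝ≥0) : ℝ) < d) from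
            fun hc => hyd hc.2)]
        ring

theorem stmt15 (a b c d : ℝ) (ha : 0 ≤ a) (hab : a < b) (hbc : b ≤ c) (hcd : c < d) :
    Sset (intervalModule a b) (intervalModule c d) = Set.Ico (max (c - a) (d - b)) (d - a) ∧
    Sset (intervalModule c d) (intervalModule a b) = ∅ := by
  constructor
  · ext s
    simp only [Sset, Set.mem_setOf_eq, Set.mem_Ico]
    constructor
    · rintro ⟨hs0, H⟩
      have hsc : (s.toNNReal : ℝ) = s := Real.coe_toNNReal s hs0
      obtain ⟨h1, h2, h3⟩ := forward_cond a b c d ha hab _ H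
      rw [hsc] at h1 h2 h3
      exact ⟨max_le (by linarith) (by linarith), by linarith⟩
    · rintro ⟨h1, h2⟩
      have hca : c - a ≤ s := le_trans (le_max_left _ _) h1
      have hdb : d - b ≤ s := le_trans (le_max_right _ _) h1
      have hs0 : 0 ≤ s := by linarith
      have hsc : (s.toNNReal : ℝ) = s := Real.coe_toNNReal s hs0
      refine ⟨hs0, buildHom a b c d s.toNNReal (by rw [hsc]; linarith) (by rw [hsc]; linarith),
        a.toNNReal, ?_⟩
      intro h0
      have ha' : ((a.toNNReal : ℝ≥0) : ℝ) = a := Real.coe_toNNReal a ha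
      have hmem : (1 : ℝ) ∈ intervalSub a b a.toNNReal := by
        have htop : intervalSub a b a.toNNReal = ⊤ :=
          if_pos ⟨le_of_eq ha'.symm, by rw [ha']; exact hab⟩
        rw [htop]; trivial
      have hval := congrArg Subtype.val
        (LinearMap.congr_fun h0 (⟨(1 : ℝ), hmem⟩ : ↥(intervalSub a b a.toNNReal)))
      change _ = (0 : ℝ) at hval
      rw [show ((buildHom a b c d s.toNNReal (by rw [hsc]; linarith) (by rw [hsc]; linarith)).app
          a.toNNReal (⟨(1 : ℝ), hmem⟩ : ↥(intervalSub a b a.toNNReal))).val =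
          (if a ≤ ((a.toNNReal : ℝ≥0) : ℝ) ∧ ((a.toNNReal + s.toNNReal : ℝ≥0) : ℝ) < d
            then (1 : ℝ) else 0) * (1 : ℝ) from rfl] at hval
      rw [if_pos ⟨le_of_eq ha'.symm, by rw [NNReal.coe_add, ha', hsc]; linarith⟩,
        one_mul] at hval
      simp at hval
  · ext s
    simp only [Sset, Set.mem_setOf_eq, Set.mem_empty_iff_false, iff_false, not_and]
    intro hs0 H
    obtain ⟨F, x, hF⟩ := H
    obtain ⟨v, hv⟩ := app_ne_zero hF
    have hv0 : v ≠ 0 := fun h => hv (by rw [h, map_zero])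
    have hvR : v.val ≠ 0 := fun h => hv0 (Subtype.ext h)
    have hx : c ≤ (x : ℝ) ∧ (x : ℝ) < d := ne_zero_cond v hvR
    have hFR : (F.app x v : ↥(intervalSub a b (x + s.toNNReal))).val ≠ 0 :=
      fun h => hv (Subtype.ext h)
    have hx2 : a ≤ ((x + s.toNNReal : ℝ≥0) : ℝ) ∧ ((x + s.toNNReal : ℝ≥0) : ℝ) < b :=
      ne_zero_cond _ hFR
    rw [NNReal.coe_add] at hx2
    have hε : (0 : ℝ) ≤ (s.toNNReal : ℝ) := (s.toNNReal).coe_nonneg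
    linarith [hx.1, hx2.2]
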